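/- arXiv:2311.01859 — 5 statements merged into one kernel-verified Lean document; each statement's English description precedes it below -/
import Mathlib

section
/- Suppose the state functions x1, x2, x3, x4 : ℝ → ℝ are differentiable and satisfy the linear system x1'(t) = x2(t), x2'(t) = v1(t), x3'(t) = x4(t), x4'(t) = v2(t), and that cos(x1(t)) ≠ 0 for all t. Let q_a^d, r_a^d : ℝ → ℝ be differentiable desired rate trajectories and let c1 > 0, c2 > 0 be real constants. If the controls are chosen as v1(t) = −g1(t) + (q_a^d)'(t) + c1·(q_a^d(t) − q_a(t)) and v2(t) = (−g2(t) + (r_a^d)'(t) + c2·(r_a^d(t) − r_a(t)))/cos(x1(t)), then the tracking errors satisfy q_a^d(t) − q_a(t) = (q_a^d(0) − q_a(0))·exp(−c1·t) and r_a^d(t) − r_a(t) = (r_a^d(0) − r_a(0))·exp(−c2·t) for all t ≥ 0; in particular q_a and r_a converge exponentially to q_a^d and r_a^d with decay rates c1 and c2. -/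
open Real

lemma exp_decay_aux (e : ℝ → ℝ) (c : ℝ)
    (he : ∀ t, HasDerivAt e (-c * e t) t) :
    ∀ t, e t = e 0 * Real.exp (-c * t) := by
  set f : ℝ → ℝ := fun t => e t * Real.exp (c * t) with hf
  have hfd : ∀ t, HasDerivAt f 0 t := by
    intro t
    have hexp : HasDerivAt (fun t : ℝ => Real.exp (c * t)) (Real.exp (c * t) * c) t := by
      exact ((Real.hasDerivAt_exp (c * t)).comp t ((hasDerivAt_id t).const_mul c)).congr_deriv (by simp)
    have := (he t).mul hexp
    exact this.congr_deriv (by ring)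
  have hconst : ∀ t, f t = f 0 := by
    intro t
    exact is_const_of_deriv_eq_zero (fun x => (hfd x).differentiableAt)
      (fun x => (hfd x).deriv) t 0
  intro t
  have h := hconst t
  have hne : Real.exp (c * t) ≠ 0 := Real.exp_ne_zero _
  have : e t = e 0 * Real.exp 0 / Real.exp (c * t) := by
    simp only [hf, mul_zero, Real.exp_zero, mul_one] at h
    rw [eq_div_iff hne, Real.exp_zero, mul_one]
    linarith [h]
  rw [this, Real.exp_zero, mul_one, div_eq_mul_inv, ← Real.exp_neg, neg_mul]


/-- Theorem 1: with the rate-tracking feedback controls, the sensor angular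
velocities converge exponentially to the desired rate trajectories, with decay
rates `c1` and `c2`. -/
theorem rate_tracking_exponential_convergence
    (p q r p' q' r' : ℝ → ℝ)
    (hp : ∀ t, HasDerivAt p (p' t) t)
    (hq : ∀ t, HasDerivAt q (q' t) t)
    (hr : ∀ t, HasDerivAt r (r' t) t)
    (x1 x2 x3 x4 v1 v2 g1 g2 qa ra : ℝ → ℝ)
    (hx1 : ∀ t, HasDerivAt x1 (x2 t) t)
    (hx2 : ∀ t, HasDerivAt x2 (v1 t) t)
    (hx3 : ∀ t, HasDerivAt x3 (x4 t) t)
    (hx4 : ∀ t, HasDerivAt x4 (v2 t) t)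
    (hcos : ∀ t, cos (x1 t) ≠ 0)
    (hqa : ∀ t, qa t = -(p t) * sin (x3 t) + q t * cos (x3 t) + x2 t)
    (hra : ∀ t, ra t =
      p t * cos (x3 t) * sin (x1 t) + q t * sin (x3 t) * sin (x1 t)
        + r t * cos (x1 t) + x4 t * cos (x1 t))
    (hg1 : ∀ t, g1 t =
      -p' t * sin (x3 t) - x4 t * p t * cos (x3 t)
        + q' t * cos (x3 t) - x4 t * q t * sin (x3 t))
    (hg2 : ∀ t, g2 t =
      (p' t * cos (x3 t) - x4 t * p t * sin (x3 t) + q' t * sin (x3 t)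
          + x4 t * q t * cos (x3 t)) * sin (x1 t)
        + (p t * cos (x3 t) + q t * sin (x3 t)) * x2 t * cos (x1 t)
        - x2 t * r t * sin (x1 t) - x2 t * x4 t * sin (x1 t)
        + r' t * cos (x1 t))
    (qad rad qad' rad' : ℝ → ℝ)
    (hqad : ∀ t, HasDerivAt qad (qad' t) t)
    (hrad : ∀ t, HasDerivAt rad (rad' t) t)
    (c1 c2 : ℝ) (hc1 : 0 < c1) (hc2 : 0 < c2)
    (hv1 : ∀ t, v1 t = -g1 t + qad' t + c1 * (qad t - qa t))
    (hv2 : ∀ t, v2 t = (-g2 t + rad' t + c2 * (rad t - ra t)) / cos (x1 t)) :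
    ∀ t, 0 ≤ t →
      qad t - qa t = (qad 0 - qa 0) * exp (-c1 * t) ∧
      rad t - ra t = (rad 0 - ra 0) * exp (-c2 * t) := by
  have hsin3 : ∀ t, HasDerivAt (fun t => sin (x3 t)) (cos (x3 t) * x4 t) t :=
    fun t => (Real.hasDerivAt_sin _).comp t (hx3 t)
  have hcos3 : ∀ t, HasDerivAt (fun t => cos (x3 t)) (-sin (x3 t) * x4 t) t :=
    fun t => (Real.hasDerivAt_cos _).comp t (hx3 t)
  have hsin1 : ∀ t, HasDerivAt (fun t => sin (x1 t)) (cos (x1 t) * x2 t) t :=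
    fun t => (Real.hasDerivAt_sin _).comp t (hx1 t)
  have hcos1 : ∀ t, HasDerivAt (fun t => cos (x1 t)) (-sin (x1 t) * x2 t) t :=
    fun t => (Real.hasDerivAt_cos _).comp t (hx1 t)
  have hqaf : qa = fun t => -(p t) * sin (x3 t) + q t * cos (x3 t) + x2 t := funext hqa
  have hraf : ra = fun t => p t * cos (x3 t) * sin (x1 t) + q t * sin (x3 t) * sin (x1 t)
        + r t * cos (x1 t) + x4 t * cos (x1 t) := funext hra
  have hqa' : ∀ t, HasDerivAt qa (g1 t + v1 t) t := by
    intro t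
    rw [hqaf]
    have := (((hp t).neg.mul (hsin3 t)).add ((hq t).mul (hcos3 t))).add (hx2 t)
    exact this.congr_deriv (by rw [hg1]; simp only [Pi.neg_apply]; ring)
  have hra' : ∀ t, HasDerivAt ra (g2 t + v2 t * cos (x1 t)) t := by
    intro t
    rw [hraf]
    have := (((((hp t).mul (hcos3 t)).mul (hsin1 t)).add
      ((((hq t).mul (hsin3 t)).mul (hsin1 t)))).add
      ((hr t).mul (hcos1 t))).add ((hx4 t).mul (hcos1 t))
    exact this.congr_deriv (by rw [hg2]; simp only [Pi.mul_apply]; ring)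
  have he1 : ∀ t, HasDerivAt (fun t => qad t - qa t) (-c1 * (qad t - qa t)) t := by
    intro t
    have := (hqad t).sub (hqa' t)
    exact this.congr_deriv (by rw [hv1]; ring)
  have he2 : ∀ t, HasDerivAt (fun t => rad t - ra t) (-c2 * (rad t - ra t)) t := by
    intro t
    have := (hrad t).sub (hra' t)
    exact this.congr_deriv (by rw [hv2, div_mul_cancel₀ _ (hcos t)]; ring)
  intro t _
  exact ⟨exp_decay_aux _ c1 he1 t, exp_decay_aux _ c2 he2 t⟩
end

section
/- Suppose the state functions x1, x2, x3, x4 : ℝ → ℝ are differentiable and satisfy the linear system x1'(t) = x2(t), x2'(t) = v1(t), x3'(t) = x4(t), x4'(t) = v2(t), and that cos(x1(t)) ≠ 0 for all t. Let q_a^d, r_a^d : ℝ → ℝ be differentiable desired rate trajectories and let c1 > 0, c2 > 0. If the controls are v1(t) = −g1(t) + (q_a^d)'(t) + c1·(q_a^d(t) − q_a(t)) and v2(t) = (−g2(t) + (r_a^d)'(t) + c2·(r_a^d(t) − r_a(t)))/cos(x1(t)), then the error functions e_q(t) = q_a^d(t) − q_a(t) and e_r(t) = r_a^d(t) − r_a(t)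 are differentiable and satisfy the first-order differential equations e_q'(t) + c1·e_q(t) = 0 and e_r'(t) + c2·e_r(t) = 0 for all t. -/
open Real

/-- With the rate-tracking feedback controls, the rate tracking errors
`e_q = q_a^d − q_a` and `e_r = r_a^d − r_a` are differentiable and satisfy the
first-order error dynamics `e' + c·e = 0`. -/
theorem rate_tracking_error_dynamics
    (p q r p' q' r' : ℝ → ℝ)
    (hp : ∀ t, HasDerivAt p (p' t) t)
    (hq : ∀ t, HasDerivAt q (q' t) t)
    (hr : ∀ t, HasDerivAt r (r' t) t)
    (x1 x2 x3 x4 v1 v2 g1 g2 qa ra : ℝ → ℝ)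
    (hx1 : ∀ t, HasDerivAt x1 (x2 t) t)
    (hx2 : ∀ t, HasDerivAt x2 (v1 t) t)
    (hx3 : ∀ t, HasDerivAt x3 (x4 t) t)
    (hx4 : ∀ t, HasDerivAt x4 (v2 t) t)
    (hcos : ∀ t, cos (x1 t) ≠ 0)
    (hqa : ∀ t, qa t = -(p t) * sin (x3 t) + q t * cos (x3 t) + x2 t)
    (hra : ∀ t, ra t =
      p t * cos (x3 t) * sin (x1 t) + q t * sin (x3 t) * sin (x1 t)
        + r t * cos (x1 t) + x4 t * cos (x1 t))
    (hg1 : ∀ t, g1 t =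
      -p' t * sin (x3 t) - x4 t * p t * cos (x3 t)
        + q' t * cos (x3 t) - x4 t * q t * sin (x3 t))
    (hg2 : ∀ t, g2 t =
      (p' t * cos (x3 t) - x4 t * p t * sin (x3 t) + q' t * sin (x3 t)
          + x4 t * q t * cos (x3 t)) * sin (x1 t)
        + (p t * cos (x3 t) + q t * sin (x3 t)) * x2 t * cos (x1 t)
        - x2 t * r t * sin (x1 t) - x2 t * x4 t * sin (x1 t)
        + r' t * cos (x1 t))
    (qad rad qad' rad' : ℝ → ℝ)
    (hqad : ∀ t, HasDerivAt qad (qad' t) t)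
    (hrad : ∀ t, HasDerivAt rad (rad' t) t)
    (c1 c2 : ℝ) (hc1 : 0 < c1) (hc2 : 0 < c2)
    (hv1 : ∀ t, v1 t = -g1 t + qad' t + c1 * (qad t - qa t))
    (hv2 : ∀ t, v2 t = (-g2 t + rad' t + c2 * (rad t - ra t)) / cos (x1 t))
    (eq er : ℝ → ℝ)
    (heq : ∀ t, eq t = qad t - qa t)
    (her : ∀ t, er t = rad t - ra t) :
    (∀ t, DifferentiableAt ℝ eq t) ∧ (∀ t, DifferentiableAt ℝ er t) ∧
      (∀ t, deriv eq t + c1 * eq t = 0) ∧ (∀ t, deriv er t + c2 * er t = 0) := by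

  have Hq : ∀ t, HasDerivAt eq (-(c1 * eq t)) t := by
    intro t
    have heqf : eq = fun s => qad s - (-(p s) * sin (x3 s) + q s * cos (x3 s) + x2 s) :=
      funext fun s => by rw [heq, hqa]
    have h := (hqad t).sub
      ((((hp t).neg.mul (hx3 t).sin).add ((hq t).mul (hx3 t).cos)).add (hx2 t))
    rw [heqf]
    convert h using 1
    · rfl
    · rfl
    · rfl
    simp only [hv1, hg1, hqa, Pi.neg_apply]; ring
  have Hr : ∀ t, HasDerivAt er (-(c2 * er t)) t := by
    intro t
    have herf : er = fun s => rad s -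
        (p s * cos (x3 s) * sin (x1 s) + q s * sin (x3 s) * sin (x1 s)
          + r s * cos (x1 s) + x4 s * cos (x1 s)) :=
      funext fun s => by rw [her, hra]
    have h := (hrad t).sub
      ((((((hp t).mul (hx3 t).cos).mul (hx1 t).sin).add
          (((hq t).mul (hx3 t).sin).mul (hx1 t).sin)).add
        ((hr t).mul (hx1 t).cos)).add ((hx4 t).mul (hx1 t).cos))
    rw [herf]
    convert h using 1
    · rfl
    · rfl
    · rfl
    have hv2' : v2 t * cos (x1 t) = -g2 t + rad' t + c2 * (rad t - ra t) := by
      rw [hv2, div_mul_cancel₀ _ (hcos t)]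
    rw [hv2']
    simp only [hg2, hra, her, Pi.mul_apply]
    ring
  refine ⟨fun t => (Hq t).differentiableAt, fun t => (Hr t).differentiableAt,
    fun t => ?_, fun t => ?_⟩
  · rw [(Hq t).deriv]; ring
  · rw [(Hr t).deriv]; ring
end

section
/- Suppose the state functions x1, x2, x3, x4 : ℝ → ℝ are differentiable and satisfy the linear system x1'(t) = x2(t), x2'(t) = v1(t), x3'(t) = x4(t), x4'(t) = v2(t), and that cos(x1(t)) ≠ 0 for all t. Let c1 > 0 and c2 > 0 be real constants. If the stabilizing controls are chosen as v1(t) = −g1(t) − c1·q_a(t) and v2(t) = (−g2(t) − c2·r_a(t))/cos(x1(t)), then for all t ≥ 0 the sensor angular velocities satisfy q_a(t) = q_a(0)·exp(−c1·t) and r_a(t) = r_a(0)·exp(−c2·t); in particular q_a(t) → 0 and r_a(t) → 0 as t → ∞, achieving line-of-sight stabilization at exponential rates c1 and c2. -/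
open Real

lemma exp_decay_of_hasDerivAt (f : ℝ → ℝ) (c : ℝ)
    (hf : ∀ t, HasDerivAt f (-c * f t) t) :
    ∀ t, f t = f 0 * exp (-c * t) := by
  have key : ∀ t : ℝ, f t * exp (c * t) = f 0 := by
    have hconst : ∀ t : ℝ, (fun s => f s * exp (c * s)) t = (fun s => f s * exp (c * s)) 0 := by
      intro t
      have hderiv : ∀ s : ℝ, HasDerivAt (fun s => f s * exp (c * s)) 0 s := by
        intro s
        have h1 : HasDerivAt (fun s => exp (c * s)) (c * exp (c * s)) s := by
          have := (hasDerivAt_id s).const_mul c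
          have h2 : HasDerivAt (rexp ∘ HMul.hMul c) (c * rexp (c * s)) s := by
            simpa [mul_comm] using (Real.hasDerivAt_exp (c * s)).comp s this
          exact h2
        have := (hf s).mul h1
        refine this.congr_deriv ?_
        ring
      exact is_const_of_deriv_eq_zero (f := fun s => f s * exp (c * s))
        (fun s => (hderiv s).differentiableAt) (fun s => (hderiv s).deriv) t 0
    simpa using hconst
  intro t
  have h := key t
  have hne : exp (c * t) ≠ 0 := (exp_pos _).ne'
  rw [← h, mul_assoc, ← Real.exp_add, show c * t + -c * t = 0 by ring, Real.exp_zero, mul_one]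

/-- Corollary 1: the stabilizing controls drive the sensor angular velocities
`q_a` and `r_a` to zero exponentially with rates `c1` and `c2`, achieving
line-of-sight stabilization; in particular they tend to `0` at infinity. -/
theorem los_stabilization
    (p q r p' q' r' : ℝ → ℝ)
    (hp : ∀ t, HasDerivAt p (p' t) t)
    (hq : ∀ t, HasDerivAt q (q' t) t)
    (hr : ∀ t, HasDerivAt r (r' t) t)
    (x1 x2 x3 x4 v1 v2 g1 g2 qa ra : ℝ → ℝ)
    (hx1 : ∀ t, HasDerivAt x1 (x2 t) t)
    (hx2 : ∀ t, HasDerivAt x2 (v1 t) t)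
    (hx3 : ∀ t, HasDerivAt x3 (x4 t) t)
    (hx4 : ∀ t, HasDerivAt x4 (v2 t) t)
    (hcos : ∀ t, cos (x1 t) ≠ 0)
    (hqa : ∀ t, qa t = -(p t) * sin (x3 t) + q t * cos (x3 t) + x2 t)
    (hra : ∀ t, ra t =
      p t * cos (x3 t) * sin (x1 t) + q t * sin (x3 t) * sin (x1 t)
        + r t * cos (x1 t) + x4 t * cos (x1 t))
    (hg1 : ∀ t, g1 t =
      -p' t * sin (x3 t) - x4 t * p t * cos (x3 t)
        + q' t * cos (x3 t) - x4 t * q t * sin (x3 t))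
    (hg2 : ∀ t, g2 t =
      (p' t * cos (x3 t) - x4 t * p t * sin (x3 t) + q' t * sin (x3 t)
          + x4 t * q t * cos (x3 t)) * sin (x1 t)
        + (p t * cos (x3 t) + q t * sin (x3 t)) * x2 t * cos (x1 t)
        - x2 t * r t * sin (x1 t) - x2 t * x4 t * sin (x1 t)
        + r' t * cos (x1 t))
    (c1 c2 : ℝ) (hc1 : 0 < c1) (hc2 : 0 < c2)
    (hv1 : ∀ t, v1 t = -g1 t - c1 * qa t)
    (hv2 : ∀ t, v2 t = (-g2 t - c2 * ra t) / cos (x1 t)) :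
    (∀ t, 0 ≤ t →
      qa t = qa 0 * exp (-c1 * t) ∧ ra t = ra 0 * exp (-c2 * t)) ∧
    Filter.Tendsto qa Filter.atTop (nhds 0) ∧
    Filter.Tendsto ra Filter.atTop (nhds 0) := by
  have hqaF : qa = fun t => -(p t) * sin (x3 t) + q t * cos (x3 t) + x2 t := funext hqa
  have hraF : ra = fun t =>
      p t * cos (x3 t) * sin (x1 t) + q t * sin (x3 t) * sin (x1 t)
        + r t * cos (x1 t) + x4 t * cos (x1 t) := funext hra
  -- sine/cosine of state derivatives
  have hsin3 : ∀ t, HasDerivAt (fun s => sin (x3 s)) (cos (x3 t) * x4 t) t :=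
    fun t => (Real.hasDerivAt_sin (x3 t)).comp t (hx3 t)
  have hcos3 : ∀ t, HasDerivAt (fun s => cos (x3 s)) (-sin (x3 t) * x4 t) t :=
    fun t => (Real.hasDerivAt_cos (x3 t)).comp t (hx3 t)
  have hsin1 : ∀ t, HasDerivAt (fun s => sin (x1 s)) (cos (x1 t) * x2 t) t :=
    fun t => (Real.hasDerivAt_sin (x1 t)).comp t (hx1 t)
  have hcos1 : ∀ t, HasDerivAt (fun s => cos (x1 s)) (-sin (x1 t) * x2 t) t :=
    fun t => (Real.hasDerivAt_cos (x1 t)).comp t (hx1 t)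
  -- qa satisfies qa' = -c1 qa
  have hqa' : ∀ t, HasDerivAt qa (-c1 * qa t) t := by
    intro t
    rw [hqaF]
    have hD : HasDerivAt (fun s => -(p s) * sin (x3 s) + q s * cos (x3 s) + x2 s)
        ((-(p' t)) * sin (x3 t) + (-(p t)) * (cos (x3 t) * x4 t)
          + (q' t * cos (x3 t) + q t * (-sin (x3 t) * x4 t)) + v1 t) t :=
      (((hp t).neg.mul (hsin3 t)).add ((hq t).mul (hcos3 t))).add (hx2 t)
    convert hD using 1
    rw [hv1 t, hg1 t, hqa t]
    ring
  -- ra satisfies ra' = -c2 ra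
  have hra' : ∀ t, HasDerivAt ra (-c2 * ra t) t := by
    intro t
    rw [hraF]
    have hD : HasDerivAt (fun s =>
        p s * cos (x3 s) * sin (x1 s) + q s * sin (x3 s) * sin (x1 s)
          + r s * cos (x1 s) + x4 s * cos (x1 s))
        (((p' t * cos (x3 t) + p t * (-sin (x3 t) * x4 t)) * sin (x1 t)
            + p t * cos (x3 t) * (cos (x1 t) * x2 t))
          + ((q' t * sin (x3 t) + q t * (cos (x3 t) * x4 t)) * sin (x1 t)
            + q t * sin (x3 t) * (cos (x1 t) * x2 t))
          + (r' t * cos (x1 t) + r t * (-sin (x1 t) * x2 t))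
          + (v2 t * cos (x1 t) + x4 t * (-sin (x1 t) * x2 t))) t :=
      (((((hp t).mul (hcos3 t)).mul (hsin1 t)).add
        (((hq t).mul (hsin3 t)).mul (hsin1 t))).add
        ((hr t).mul (hcos1 t))).add ((hx4 t).mul (hcos1 t))
    convert hD using 1
    have hv2c : v2 t * cos (x1 t) = -g2 t - c2 * ra t := by
      rw [hv2 t, div_mul_cancel₀ _ (hcos t)]
    rw [hv2c, hg2 t, hra t]
    ring
  have hqsol := exp_decay_of_hasDerivAt qa c1 hqa'
  have hrsol := exp_decay_of_hasDerivAt ra c2 hra'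
  have hlin : ∀ c : ℝ, 0 < c → Filter.Tendsto (fun t : ℝ => exp (-c * t)) Filter.atTop (nhds 0) := by
    intro c hc
    have h1 : Filter.Tendsto (fun t : ℝ => c * t) Filter.atTop Filter.atTop :=
      Filter.Tendsto.const_mul_atTop hc Filter.tendsto_id
    have h2 : Filter.Tendsto (fun t : ℝ => -c * t) Filter.atTop Filter.atBot :=
      (Filter.tendsto_neg_atTop_atBot.comp h1).congr (fun t => by simp [Function.comp, neg_mul])
    exact Real.tendsto_exp_atBot.comp h2
  refine ⟨fun t _ => ⟨hqsol t, hrsol t⟩, ?_, ?_⟩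
  · have : Filter.Tendsto (fun t => qa 0 * exp (-c1 * t)) Filter.atTop (nhds (qa 0 * 0)) :=
      (hlin c1 hc1).const_mul _
    rw [mul_zero] at this
    exact this.congr (fun t => (hqsol t).symm)
  · have : Filter.Tendsto (fun t => ra 0 * exp (-c2 * t)) Filter.atTop (nhds (ra 0 * 0)) :=
      (hlin c2 hc2).const_mul _
    rw [mul_zero] at this
    exact this.congr (fun t => (hrsol t).symm)
end

section
/- Suppose the state functions x1, x2, x3, x4 : ℝ → ℝ are differentiable and satisfy the linear system x1'(t) = x2(t), x2'(t) = v1(t), x3'(t) = x4(t), x4'(t) = v2(t), and that cos(x1(t)) ≠ 0 for all t. Let θ_q, θ_r : ℝ → ℝ be differentiable functions with θ_q'(t) = q_a(t) and θ_r'(t) = r_a(t) (the elevation and azimuth LOS angles), let θ_q^d, θ_r^d : ℝ → ℝ be twice-differentiable desired trajectories, and let c1, c2, c3, c4 > 0 be real constants. If the controls are chosen as v1(t) = −g1(t) + (θ_q^d)''(t) + c1·((θ_q^d)'(t) − θ_q'(t)) + c2·(θ_q^d(t) − θ_q(t)) and v2(t) = (1/cos(x1(t)))·(−g2(t) + (θ_r^d)''(t)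 + c3·((θ_r^d)'(t) − θ_r'(t)) + c4·(θ_r^d(t) − θ_r(t))), then the errors e_q(t) = θ_q^d(t) − θ_q(t) and e_r(t) = θ_r^d(t) − θ_r(t) are twice differentiable and satisfy the second-order differential equations e_q''(t) + c1·e_q'(t) + c2·e_q(t) = 0 and e_r''(t) + c3·e_r'(t) + c4·e_r(t) = 0 for all t. -/
open Real

/-- Theorem 2 (error dynamics): with the LOS-tracking feedback controls, the
elevation and azimuth tracking errors are twice differentiable and satisfy the
second-order error dynamics `e'' + c·e' + c'·e = 0`. -/
theorem los_tracking_error_dynamics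
    (p q r p' q' r' : ℝ → ℝ)
    (hp : ∀ t, HasDerivAt p (p' t) t)
    (hq : ∀ t, HasDerivAt q (q' t) t)
    (hr : ∀ t, HasDerivAt r (r' t) t)
    (x1 x2 x3 x4 v1 v2 g1 g2 qa ra : ℝ → ℝ)
    (hx1 : ∀ t, HasDerivAt x1 (x2 t) t)
    (hx2 : ∀ t, HasDerivAt x2 (v1 t) t)
    (hx3 : ∀ t, HasDerivAt x3 (x4 t) t)
    (hx4 : ∀ t, HasDerivAt x4 (v2 t) t)
    (hcos : ∀ t, cos (x1 t) ≠ 0)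
    (hqa : ∀ t, qa t = -(p t) * sin (x3 t) + q t * cos (x3 t) + x2 t)
    (hra : ∀ t, ra t =
      p t * cos (x3 t) * sin (x1 t) + q t * sin (x3 t) * sin (x1 t)
        + r t * cos (x1 t) + x4 t * cos (x1 t))
    (hg1 : ∀ t, g1 t =
      -p' t * sin (x3 t) - x4 t * p t * cos (x3 t)
        + q' t * cos (x3 t) - x4 t * q t * sin (x3 t))
    (hg2 : ∀ t, g2 t =
      (p' t * cos (x3 t) - x4 t * p t * sin (x3 t) + q' t * sin (x3 t)
          + x4 t * q t * cos (x3 t)) * sin (x1 t)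
        + (p t * cos (x3 t) + q t * sin (x3 t)) * x2 t * cos (x1 t)
        - x2 t * r t * sin (x1 t) - x2 t * x4 t * sin (x1 t)
        + r' t * cos (x1 t))
    (thq thr : ℝ → ℝ)
    (hthq : ∀ t, HasDerivAt thq (qa t) t)
    (hthr : ∀ t, HasDerivAt thr (ra t) t)
    (thqd thrd thqd' thrd' thqd'' thrd'' : ℝ → ℝ)
    (hthqd : ∀ t, HasDerivAt thqd (thqd' t) t)
    (hthrd : ∀ t, HasDerivAt thrd (thrd' t) t)
    (hthqd' : ∀ t, HasDerivAt thqd' (thqd'' t) t)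
    (hthrd' : ∀ t, HasDerivAt thrd' (thrd'' t) t)
    (c1 c2 c3 c4 : ℝ) (hc1 : 0 < c1) (hc2 : 0 < c2) (hc3 : 0 < c3) (hc4 : 0 < c4)
    (hv1 : ∀ t, v1 t =
      -g1 t + thqd'' t + c1 * (thqd' t - deriv thq t) + c2 * (thqd t - thq t))
    (hv2 : ∀ t, v2 t = (1 / cos (x1 t)) *
      (-g2 t + thrd'' t + c3 * (thrd' t - deriv thr t) + c4 * (thrd t - thr t)))
    (eq er : ℝ → ℝ)
    (heq : ∀ t, eq t = thqd t - thq t)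
    (her : ∀ t, er t = thrd t - thr t) :
    (∀ t, DifferentiableAt ℝ eq t) ∧ (∀ t, DifferentiableAt ℝ (deriv eq) t) ∧
    (∀ t, DifferentiableAt ℝ er t) ∧ (∀ t, DifferentiableAt ℝ (deriv er) t) ∧
    (∀ t, deriv (deriv eq) t + c1 * deriv eq t + c2 * eq t = 0) ∧
    (∀ t, deriv (deriv er) t + c3 * deriv er t + c4 * er t = 0) := by
  -- derivative of qa
  have hqa' : ∀ t, HasDerivAt qa (g1 t + v1 t) t := by
    intro t
    have hfun : qa = fun s => -(p s) * sin (x3 s) + q s * cos (x3 s) + x2 s :=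
      funext hqa
    rw [hfun]
    have h := (((hp t).neg.mul ((hx3 t).sin)).add ((hq t).mul ((hx3 t).cos))).add (hx2 t)
    refine h.congr_deriv ?_
    rw [hg1 t]; simp only [Pi.neg_apply, Pi.mul_apply]; ring
  -- derivative of ra
  have hra' : ∀ t, HasDerivAt ra (g2 t + v2 t * cos (x1 t)) t := by
    intro t
    have hfun : ra = fun s => p s * cos (x3 s) * sin (x1 s)
        + q s * sin (x3 s) * sin (x1 s) + r s * cos (x1 s) + x4 s * cos (x1 s) :=
      funext hra
    rw [hfun]
    have h := (((((hp t).mul ((hx3 t).cos)).mul ((hx1 t).sin)).add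
      (((hq t).mul ((hx3 t).sin)).mul ((hx1 t).sin))).add
      ((hr t).mul ((hx1 t).cos))).add ((hx4 t).mul ((hx1 t).cos))
    refine h.congr_deriv ?_
    rw [hg2 t]; simp only [Pi.neg_apply, Pi.mul_apply]; ring
  -- deriv of thq, thr
  have hdthq : ∀ t, deriv thq t = qa t := fun t => (hthq t).deriv
  have hdthr : ∀ t, deriv thr t = ra t := fun t => (hthr t).deriv
  -- eq
  have heq' : ∀ t, HasDerivAt eq (thqd' t - qa t) t := by
    intro t
    have hfun : eq = fun s => thqd s - thq s := funext heq
    rw [hfun]; exact (hthqd t).sub (hthq t)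
  have hdeq : deriv eq = fun t => thqd' t - qa t := funext fun t => (heq' t).deriv
  have heq'' : ∀ t, HasDerivAt (deriv eq) (thqd'' t - (g1 t + v1 t)) t := by
    intro t
    rw [hdeq]; exact (hthqd' t).sub (hqa' t)
  -- er
  have her' : ∀ t, HasDerivAt er (thrd' t - ra t) t := by
    intro t
    have hfun : er = fun s => thrd s - thr s := funext her
    rw [hfun]; exact (hthrd t).sub (hthr t)
  have hder : deriv er = fun t => thrd' t - ra t := funext fun t => (her' t).deriv
  have her'' : ∀ t, HasDerivAt (deriv er) (thrd'' t - (g2 t + v2 t * cos (x1 t))) t := by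
    intro t
    rw [hder]; exact (hthrd' t).sub (hra' t)
  refine ⟨fun t => (heq' t).differentiableAt, fun t => (heq'' t).differentiableAt,
    fun t => (her' t).differentiableAt, fun t => (her'' t).differentiableAt, ?_, ?_⟩
  · intro t
    rw [(heq'' t).deriv, hdeq]
    simp only [heq t]
    rw [hv1 t, hdthq t]
    ring
  · intro t
    rw [(her'' t).deriv, hder]
    simp only [her t]
    have hv2c : v2 t * cos (x1 t) =
        -g2 t + thrd'' t + c3 * (thrd' t - ra t) + c4 * (thrd t - thr t) := by
      rw [hv2 t, hdthr t]
      field_simp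
      rw [mul_div_cancel_left₀ _ (hcos t)]
    rw [hv2c]
    ring
end

section
/- Suppose the state functions x1, x2, x3, x4 : ℝ → ℝ are differentiable and satisfy the linear system x1'(t) = x2(t), x2'(t) = v1(t), x3'(t) = x4(t), x4'(t) = v2(t), and that cos(x1(t)) ≠ 0 for all t. Let θ_q, θ_r : ℝ → ℝ be differentiable functions with θ_q'(t) = q_a(t) and θ_r'(t) = r_a(t) (the elevation and azimuth LOS angles), let θ_q^d, θ_r^d : ℝ → ℝ be twice-differentiable desired trajectories, and let c1, c2, c3, c4 > 0 be real constants. If the controls are chosen as v1(t) = −g1(t) + (θ_q^d)''(t) + c1·((θ_q^d)'(t) − θ_q'(t)) + c2·(θ_q^d(t) − θ_q(t)) and v2(t) = (1/cos(x1(t)))·(−g2(t) + (θ_r^d)''(t) + c3·((θ_r^d)'(t) − θ_r'(t)) + c4·(θ_r^d(t) − θ_r(t))), then there exist constants M ≥ 0 and λ > 0 such that |θ_q(t) − θ_q^d(t)| ≤ M·exp(−λ·t) and |θ_r(t) − θ_r^d(t)| ≤ M·exp(−λ·t) for all t ≥ 0; in particular the elevation and azimuth angles of the sensor LOS converge exponentially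 to their desired trajectories. -/
open Real

lemma exp_decay_aux_s9 (a b : ℝ) (ha : 0 < a) (hb : 0 < b) (e e' : ℝ → ℝ)
    (he : ∀ t, HasDerivAt e (e' t) t)
    (he' : ∀ t, HasDerivAt e' (-(a * e' t) - b * e t) t) :
    ∃ M lam : ℝ, 0 ≤ M ∧ 0 < lam ∧ ∀ t, 0 ≤ t → |e t| ≤ M * exp (-lam * t) := by
  set ε := min a (b / a) with hεdef
  have hεpos : 0 < ε := lt_min ha (div_pos hb ha)
  have hεa : ε ≤ a := min_le_left _ _
  have hεab : ε * a ≤ b := by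
    have h := min_le_right a (b / a)
    have : ε * a ≤ (b / a) * a := by nlinarith
    calc ε * a ≤ (b / a) * a := this
      _ = b := by field_simp
  have hε2 : ε ^ 2 ≤ b := by nlinarith
  set V : ℝ → ℝ := fun t => b * (e t * e t) + ε * (e t * e' t) + e' t * e' t with hVdef
  set V' : ℝ → ℝ := fun t =>
    b * (e' t * e t + e t * e' t)
      + ε * (e' t * e' t + e t * (-(a * e' t) - b * e t))
      + ((-(a * e' t) - b * e t) * e' t + e' t * (-(a * e' t) - b * e t)) with hV'def
  have hVd : ∀ t, HasDerivAt V (V' t) t := by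
    intro t
    exact ((((he t).mul (he t)).const_mul b).add
      (((he t).mul (he' t)).const_mul ε)).add ((he' t).mul (he' t))
  set lam0 : ℝ := ε / 2 with hlam0
  have hkey : ∀ t, V' t + lam0 * V t ≤ 0 := by
    intro t
    simp only [hV'def, hVdef, hlam0]
    set x := e t; set y := e' t
    have h1 : (2*a - ε)^2 ≤ 4*a^2 := by nlinarith
    have h2' : ε^2 * (2*a - ε)^2 ≤ ε^2 * (4*a^2) := by
      exact mul_le_mul_of_nonneg_left h1 (sq_nonneg ε)
    have h3' : 4*(ε^2*a^2) ≤ 4*(ε*a*b) := by nlinarith [mul_pos hεpos ha]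
    have h4' : 4*(ε*a*b) ≤ 4 * (4*a - 3*ε) * (ε * b) := by nlinarith [mul_pos hεpos hb]
    have hdisc : ε^2 * (2*a - ε)^2 ≤ 4 * (4*a - 3*ε) * (ε * b) := by nlinarith
    have hA : 0 < 4*a - 3*ε := by nlinarith
    nlinarith [sq_nonneg (2*(4*a - 3*ε)*y + ε*(2*a - ε)*x), sq_nonneg x, sq_nonneg y,
      mul_nonneg (sq_nonneg x) (sub_nonneg.2 hdisc)]
  set W : ℝ → ℝ := fun t => V t * exp (lam0 * t) with hWdef
  have hWd : ∀ t, HasDerivAt W ((V' t + lam0 * V t) * exp (lam0 * t)) t := by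
    intro t
    have hexp : HasDerivAt (fun t => exp (lam0 * t)) (exp (lam0 * t) * lam0) t := by
      exact HasDerivAt.exp (by simpa using (hasDerivAt_id t).const_mul lam0)
    have := (hVd t).mul hexp
    refine this.congr_deriv ?_; ring
  have hanti : Antitone W := by
    apply antitone_of_deriv_nonpos
    · exact fun t => (hWd t).differentiableAt
    · intro t
      rw [(hWd t).deriv]
      exact mul_nonpos_of_nonpos_of_nonneg (hkey t) (exp_nonneg _)
  have hVlb : ∀ t, b / 2 * (e t * e t) ≤ V t := by
    intro t; simp only [hVdef]; nlinarith [sq_nonneg (e t), sq_nonneg (e' t), sq_nonneg (ε * e t + e' t)]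
  have hV0 : 0 ≤ V 0 := le_trans (mul_nonneg (by positivity) (mul_self_nonneg _)) (hVlb 0)
  refine ⟨Real.sqrt (2 / b * V 0), ε / 4, Real.sqrt_nonneg _, by positivity, ?_⟩
  intro t ht
  have hWle : W t ≤ W 0 := hanti ht
  have h1 : V t * exp (lam0 * t) ≤ V 0 := by simpa [hWdef] using hWle
  have hexppos : (0:ℝ) < exp (lam0 * t) := exp_pos _
  have h2 : e t * e t ≤ 2 / b * V 0 * exp (-lam0 * t) := by
    have h3 : b / 2 * (e t * e t) * exp (lam0 * t) ≤ V 0 :=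
      le_trans (by nlinarith [hVlb t]) h1
    have h4 : e t * e t ≤ 2 / b * V 0 / exp (lam0 * t) := by
      rw [le_div_iff₀ hexppos]
      calc e t * e t * exp (lam0 * t) = 2 / b * (b / 2 * (e t * e t) * exp (lam0 * t)) := by
            field_simp
        _ ≤ 2 / b * V 0 := by
            have : (0:ℝ) ≤ 2 / b := by positivity
            nlinarith [h3]
    calc e t * e t ≤ 2 / b * V 0 / exp (lam0 * t) := h4
      _ = 2 / b * V 0 * exp (-lam0 * t) := by
            rw [neg_mul, exp_neg, div_eq_mul_inv]
  have habs : |e t| = Real.sqrt (e t * e t) := (Real.sqrt_mul_self_eq_abs _).symm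
  have hsq := Real.sqrt_le_sqrt h2
  rw [Real.sqrt_mul (by positivity : (0:ℝ) ≤ 2 / b * V 0)] at hsq
  have hse : Real.sqrt (exp (-lam0 * t)) = exp (-(ε/4) * t) := by
    rw [show -lam0 * t = (-(ε/4)*t) + (-(ε/4)*t) by rw [hlam0]; ring, exp_add,
      Real.sqrt_mul_self (exp_nonneg _)]
  rw [habs]
  calc Real.sqrt (e t * e t) ≤ Real.sqrt (2 / b * V 0) * Real.sqrt (exp (-lam0 * t)) := hsq
    _ = Real.sqrt (2 / b * V 0) * exp (-(ε/4) * t) := by rw [hse]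



/-- Theorem 2: with the LOS-tracking feedback controls, the elevation and
azimuth angles of the sensor LOS converge exponentially to the desired
trajectories. -/
theorem los_tracking_exponential_convergence
    (p q r p' q' r' : ℝ → ℝ)
    (hp : ∀ t, HasDerivAt p (p' t) t)
    (hq : ∀ t, HasDerivAt q (q' t) t)
    (hr : ∀ t, HasDerivAt r (r' t) t)
    (x1 x2 x3 x4 v1 v2 g1 g2 qa ra : ℝ → ℝ)
    (hx1 : ∀ t, HasDerivAt x1 (x2 t) t)
    (hx2 : ∀ t, HasDerivAt x2 (v1 t) t)
    (hx3 : ∀ t, HasDerivAt x3 (x4 t) t)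
    (hx4 : ∀ t, HasDerivAt x4 (v2 t) t)
    (hcos : ∀ t, cos (x1 t) ≠ 0)
    (hqa : ∀ t, qa t = -(p t) * sin (x3 t) + q t * cos (x3 t) + x2 t)
    (hra : ∀ t, ra t =
      p t * cos (x3 t) * sin (x1 t) + q t * sin (x3 t) * sin (x1 t)
        + r t * cos (x1 t) + x4 t * cos (x1 t))
    (hg1 : ∀ t, g1 t =
      -p' t * sin (x3 t) - x4 t * p t * cos (x3 t)
        + q' t * cos (x3 t) - x4 t * q t * sin (x3 t))
    (hg2 : ∀ t, g2 t =
      (p' t * cos (x3 t) - x4 t * p t * sin (x3 t) + q' t * sin (x3 t)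
          + x4 t * q t * cos (x3 t)) * sin (x1 t)
        + (p t * cos (x3 t) + q t * sin (x3 t)) * x2 t * cos (x1 t)
        - x2 t * r t * sin (x1 t) - x2 t * x4 t * sin (x1 t)
        + r' t * cos (x1 t))
    (thq thr : ℝ → ℝ)
    (hthq : ∀ t, HasDerivAt thq (qa t) t)
    (hthr : ∀ t, HasDerivAt thr (ra t) t)
    (thqd thrd thqd' thrd' thqd'' thrd'' : ℝ → ℝ)
    (hthqd : ∀ t, HasDerivAt thqd (thqd' t) t)
    (hthrd : ∀ t, HasDerivAt thrd (thrd' t) t)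
    (hthqd' : ∀ t, HasDerivAt thqd' (thqd'' t) t)
    (hthrd' : ∀ t, HasDerivAt thrd' (thrd'' t) t)
    (c1 c2 c3 c4 : ℝ) (hc1 : 0 < c1) (hc2 : 0 < c2) (hc3 : 0 < c3) (hc4 : 0 < c4)
    (hv1 : ∀ t, v1 t =
      -g1 t + thqd'' t + c1 * (thqd' t - deriv thq t) + c2 * (thqd t - thq t))
    (hv2 : ∀ t, v2 t = (1 / cos (x1 t)) *
      (-g2 t + thrd'' t + c3 * (thrd' t - deriv thr t) + c4 * (thrd t - thr t))) :
    ∃ M lam : ℝ, 0 ≤ M ∧ 0 < lam ∧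
      ∀ t, 0 ≤ t →
        |thq t - thqd t| ≤ M * exp (-lam * t) ∧
        |thr t - thrd t| ≤ M * exp (-lam * t) := by
  -- q channel
  have hqaf : qa = fun t => -(p t) * sin (x3 t) + q t * cos (x3 t) + x2 t := funext hqa
  have hraf : ra = fun t => p t * cos (x3 t) * sin (x1 t) + q t * sin (x3 t) * sin (x1 t)
      + r t * cos (x1 t) + x4 t * cos (x1 t) := funext hra
  have hqa' : ∀ t, HasDerivAt qa (g1 t + v1 t) t := by
    intro t
    rw [hqaf]
    have h := (((hp t).neg.mul (hx3 t).sin).add ((hq t).mul (hx3 t).cos)).add (hx2 t)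
    refine h.congr_deriv ?_
    rw [hg1]; simp only [Pi.mul_apply, Pi.neg_apply]; ring
  have hra' : ∀ t, HasDerivAt ra (g2 t + v2 t * cos (x1 t)) t := by
    intro t
    rw [hraf]
    have h := ((((hp t).mul (hx3 t).cos).mul (hx1 t).sin).add
        (((hq t).mul (hx3 t).sin).mul (hx1 t).sin)).add
        ((hr t).mul (hx1 t).cos) |>.add ((hx4 t).mul (hx1 t).cos)
    refine h.congr_deriv ?_
    rw [hg2]; simp only [Pi.mul_apply]; ring
  have heq : ∀ t, HasDerivAt (fun t => thq t - thqd t) (qa t - thqd' t) t :=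
    fun t => (hthq t).sub (hthqd t)
  have heq' : ∀ t, HasDerivAt (fun t => qa t - thqd' t)
      (-(c1 * (qa t - thqd' t)) - c2 * ((fun t => thq t - thqd t) t)) t := by
    intro t
    have h := (hqa' t).sub (hthqd' t)
    refine h.congr_deriv ?_
    have hv1' := hv1 t
    rw [(hthq t).deriv] at hv1'
    rw [hv1']; ring
  have her : ∀ t, HasDerivAt (fun t => thr t - thrd t) (ra t - thrd' t) t :=
    fun t => (hthr t).sub (hthrd t)
  have her' : ∀ t, HasDerivAt (fun t => ra t - thrd' t)
      (-(c3 * (ra t - thrd' t)) - c4 * ((fun t => thr t - thrd t) t)) t := by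
    intro t
    have h := (hra' t).sub (hthrd' t)
    refine h.congr_deriv ?_
    have hv2' := hv2 t
    rw [(hthr t).deriv] at hv2'
    rw [hv2']
    field_simp [hcos t]
    ring
  obtain ⟨M1, l1, hM1, hl1, H1⟩ := exp_decay_aux_s9 c1 c2 hc1 hc2 _ _ heq heq'
  obtain ⟨M2, l2, hM2, hl2, H2⟩ := exp_decay_aux_s9 c3 c4 hc3 hc4 _ _ her her'
  refine ⟨max M1 M2, min l1 l2, le_trans hM1 (le_max_left _ _), lt_min hl1 hl2, ?_⟩
  intro t ht
  have hexp1 : exp (-l1 * t) ≤ exp (-(min l1 l2) * t) := by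
    apply exp_le_exp.2
    nlinarith [min_le_left l1 l2]
  have hexp2 : exp (-l2 * t) ≤ exp (-(min l1 l2) * t) := by
    apply exp_le_exp.2
    nlinarith [min_le_right l1 l2]
  constructor
  · calc |thq t - thqd t| ≤ M1 * exp (-l1 * t) := H1 t ht
      _ ≤ max M1 M2 * exp (-(min l1 l2) * t) :=
        mul_le_mul (le_max_left _ _) hexp1 (exp_nonneg _)
          (le_trans hM1 (le_max_left _ _))
  · calc |thr t - thrd t| ≤ M2 * exp (-l2 * t) := H2 t ht
      _ ≤ max M1 M2 * exp (-(min l1 l2) * t) :=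
        mul_le_mul (le_max_right _ _) hexp2 (exp_nonneg _)
          (le_trans hM1 (le_max_left _ _))
end
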